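/- For every real x > 0, −coth(x) + coth(2x) + 2·coth(4x) = tanh(x)·(4·sinh²(x) + 3)/(2·sinh²(x) + 1). In particular the left-hand side is strictly positive for x > 0. -/

import Mathlib

/-- The real hyperbolic cotangent. -/
noncomputable def coth (x : ℝ) : ℝ := Real.cosh x / Real.sinh x

/-- For every real `x > 0`,
`−coth(x) + coth(2x) + 2 coth(4x) = tanh(x)·(4 sinh²(x) + 3)/(2 sinh²(x) + 1)`,
and in particular the left-hand side is strictly positive. -/
theorem coth_identity_244 (x : ℝ) (hx : 0 < x) :
    -coth x + coth (2 * x) + 2 * coth (4 * x) =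
      Real.tanh x * (4 * (Real.sinh x) ^ 2 + 3) / (2 * (Real.sinh x) ^ 2 + 1) ∧
      0 < -coth x + coth (2 * x) + 2 * coth (4 * x) := by
  have hs : 0 < Real.sinh x := Real.sinh_pos_iff.2 hx
  have hc : 0 < Real.cosh x := Real.cosh_pos x
  have hcsq : Real.cosh x ^ 2 = Real.sinh x ^ 2 + 1 := Real.cosh_sq x
  have h4 : (4 : ℝ) * x = 2 * (2 * x) := by ring
  set s := Real.sinh x with hsdef
  set c := Real.cosh x with hcdef
  have hu : (0:ℝ) < 2 * c ^ 2 - 1 := by nlinarith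
  have key : -coth x + coth (2 * x) + 2 * coth (4 * x) =
      Real.tanh x * (4 * s ^ 2 + 3) / (2 * s ^ 2 + 1) := by
    rw [h4]
    simp only [coth, Real.tanh_eq_sinh_div_cosh, Real.sinh_two_mul, Real.cosh_two_mul,
      ← hsdef, ← hcdef]
    have hsc : (2 : ℝ) * s * c ≠ 0 := by positivity
    have h2 : (2 : ℝ) * c ^ 2 - 1 ≠ 0 := ne_of_gt hu
    have h5 : (2 : ℝ) * s ^ 2 + 1 ≠ 0 := by positivity
    field_simp
    linear_combination (4*s^4) * hcsq
  refine ⟨key, ?_⟩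
  rw [key, Real.tanh_eq_sinh_div_cosh, ← hsdef, ← hcdef]
  positivity
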